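/- Let A and B be bialgebras over ℂ with a bialgebra pairing ⟨·,·⟩ : A × B → ℂ, and let R be a left A-module algebra with smash product R # A. Then the formula b · (r ⊗ a) = Σ r ⊗ a₍₁₎ ⟨a₍₂₎, b⟩ makes R # A a left B-module algebra: (bb') · x = b · (b' · x), 1_B · x = x, b · (xy) = Σ (b₍₁₎ · x)(b₍₂₎ · y), and b · (1_R ⊗ 1_A) = ε_B(b)(1_R ⊗ 1_A), for all b, b' ∈ B and x, y ∈ R ⊗ A, where xy denotes the smash product multiplication. -/

import Mathlib

open TensorProduct

section Aux

variable {A B : Type*} [Ring A] [Bialgebra ℂ A] [Ring B] [Bialgebra ℂ B]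

/-- The dual action on `A`: `rho pair b a = Σ a₍₁₎ ⟨a₍₂₎, b⟩`. -/
noncomputable def rho (pair : A →ₗ[ℂ] B →ₗ[ℂ] ℂ) (b : B) : A →ₗ[ℂ] A :=
  (TensorProduct.rid ℂ A).toLinearMap ∘ₗ
    LinearMap.lTensor A (pair.flip b) ∘ₗ (Coalgebra.comul (R := ℂ))

lemma rho_apply (pair : A →ₗ[ℂ] B →ₗ[ℂ] ℂ) (b : B) (a : A) :
    rho pair b a =
      (TensorProduct.rid ℂ A)
        (LinearMap.lTensor A (pair.flip b) (Coalgebra.comul (R := ℂ) a)) := rfl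

lemma rho_one (pair : A →ₗ[ℂ] B →ₗ[ℂ] ℂ)
    (hpair_oneB : ∀ a : A, pair a 1 = Coalgebra.counit (R := ℂ) a) :
    rho pair (1 : B) = LinearMap.id := by
  have hflip : pair.flip (1 : B) = (Coalgebra.counit (R := ℂ) : A →ₗ[ℂ] ℂ) := by
    ext a; exact hpair_oneB a
  ext a
  rw [rho_apply, hflip]
  simp [Coalgebra.lTensor_counit_comul (R := ℂ) a]

lemma rho_mul (pair : A →ₗ[ℂ] B →ₗ[ℂ] ℂ)
    (hpair_mulB : ∀ (a : A) (b b' : B),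
      pair a (b * b') =
        LinearMap.mul' ℂ ℂ
          (TensorProduct.map (pair.flip b) (pair.flip b') (Coalgebra.comul (R := ℂ) a)))
    (b b' : B) : rho pair (b * b') = rho pair b ∘ₗ rho pair b' := by
  set c : A ⊗[ℂ] A →ₗ[ℂ] ℂ :=
    LinearMap.mul' ℂ ℂ ∘ₗ TensorProduct.map (pair.flip b) (pair.flip b') with hc
  have hflip : pair.flip (b * b') = c ∘ₗ (Coalgebra.comul (R := ℂ)) := by
    ext a; exact hpair_mulB a b b'
  set F : A ⊗[ℂ] (A ⊗[ℂ] A) →ₗ[ℂ] A :=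
    (TensorProduct.rid ℂ A).toLinearMap ∘ₗ LinearMap.lTensor A c with hF
  set G : (A ⊗[ℂ] A) ⊗[ℂ] A →ₗ[ℂ] A :=
    (TensorProduct.rid ℂ A).toLinearMap ∘ₗ
      TensorProduct.map
        ((TensorProduct.rid ℂ A).toLinearMap ∘ₗ LinearMap.lTensor A (pair.flip b))
        (pair.flip b') with hG
  ext a
  have hL : rho pair (b * b') a =
      F (LinearMap.lTensor A (Coalgebra.comul (R := ℂ)) (Coalgebra.comul (R := ℂ) a)) := by
    rw [rho_apply, hflip, LinearMap.lTensor_comp]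
    rfl
  have hRmap : (rho pair b) ∘ₗ
      ((TensorProduct.rid ℂ A).toLinearMap ∘ₗ LinearMap.lTensor A (pair.flip b')) =
      G ∘ₗ LinearMap.rTensor A (Coalgebra.comul (R := ℂ)) := by
    apply TensorProduct.ext'
    intro x y
    simp [hG, rho_apply, map_smul]
  have hR : rho pair b (rho pair b' a) =
      G (LinearMap.rTensor A (Coalgebra.comul (R := ℂ)) (Coalgebra.comul (R := ℂ) a)) := by
    have := LinearMap.congr_fun hRmap (Coalgebra.comul (R := ℂ) a)
    rw [rho_apply pair b' a]
    simpa using this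
  have hFG : F ∘ₗ (TensorProduct.assoc ℂ A A A).toLinearMap = G := by
    apply TensorProduct.ext_threefold
    intro x y z
    simp [hF, hG, hc, LinearMap.mul'_apply, smul_smul, mul_comm]
  have hco := Coalgebra.coassoc_apply (R := ℂ) a
  calc rho pair (b * b') a
      = F (LinearMap.lTensor A (Coalgebra.comul (R := ℂ)) (Coalgebra.comul (R := ℂ) a)) := hL
    _ = F ((TensorProduct.assoc ℂ A A A)
          (LinearMap.rTensor A (Coalgebra.comul (R := ℂ)) (Coalgebra.comul (R := ℂ) a))) := by
          rw [hco]
    _ = G (LinearMap.rTensor A (Coalgebra.comul (R := ℂ)) (Coalgebra.comul (R := ℂ) a)) := by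
          rw [← hFG]; rfl
    _ = rho pair b (rho pair b' a) := hR.symm

end Aux


/-- Given a bialgebra pairing of `A` and `B` and a left `A`-module algebra
`R`, the dual action `b · (r ⊗ a) = Σ r ⊗ a₍₁₎ ⟨a₍₂₎, b⟩` makes the smash product `R # A`
a left `B`-module algebra. -/
theorem stmt_10 {A B R : Type*} [Ring A] [Bialgebra ℂ A] [Ring B] [Bialgebra ℂ B]
    [Ring R] [Algebra ℂ R]
    (pair : A →ₗ[ℂ] B →ₗ[ℂ] ℂ)
    (hpair_mulA : ∀ (a a' : A) (b : B),
      pair (a * a') b =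
        LinearMap.mul' ℂ ℂ
          (TensorProduct.map (pair a) (pair a') (Coalgebra.comul (R := ℂ) b)))
    (hpair_mulB : ∀ (a : A) (b b' : B),
      pair a (b * b') =
        LinearMap.mul' ℂ ℂ
          (TensorProduct.map (pair.flip b) (pair.flip b') (Coalgebra.comul (R := ℂ) a)))
    (hpair_oneA : ∀ b : B, pair 1 b = Coalgebra.counit (R := ℂ) b)
    (hpair_oneB : ∀ a : A, pair a 1 = Coalgebra.counit (R := ℂ) a)
    (act : A →ₗ[ℂ] R →ₗ[ℂ] R)
    (hact_one : ∀ r : R, act 1 r = r)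
    (hact_mul : ∀ (a a' : A) (r : R), act (a * a') r = act a (act a' r))
    (hma_mul : ∀ (a : A) (r s : R),
      act a (r * s) =
        LinearMap.mul' ℂ R
          (TensorProduct.map (act.flip r) (act.flip s) (Coalgebra.comul (R := ℂ) a)))
    (hma_one : ∀ a : A, act a 1 = Coalgebra.counit (R := ℂ) a • (1 : R))
    (mul : (R ⊗[ℂ] A) →ₗ[ℂ] (R ⊗[ℂ] A) →ₗ[ℂ] (R ⊗[ℂ] A))
    (hmul : ∀ (r : R) (a : A) (s : R) (a' : A),
      mul (r ⊗ₜ[ℂ] a) (s ⊗ₜ[ℂ] a') =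
        TensorProduct.map ((LinearMap.mulLeft ℂ r).comp (act.flip s))
          (LinearMap.mulRight ℂ a') (Coalgebra.comul (R := ℂ) a))
    (actB : B →ₗ[ℂ] (R ⊗[ℂ] A) →ₗ[ℂ] (R ⊗[ℂ] A))
    (hactB : ∀ (b : B) (r : R) (a : A),
      actB b (r ⊗ₜ[ℂ] a) =
        r ⊗ₜ[ℂ]
          ((TensorProduct.rid ℂ A)
            (TensorProduct.map LinearMap.id (pair.flip b) (Coalgebra.comul (R := ℂ) a)))) :
    (∀ (b b' : B) (x : R ⊗[ℂ] A), actB (b * b') x = actB b (actB b' x)) ∧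
    (∀ x : R ⊗[ℂ] A, actB 1 x = x) ∧
    (∀ (b : B) (x y : R ⊗[ℂ] A),
      actB b (mul x y) =
        TensorProduct.lift mul
          (TensorProduct.map (actB.flip x) (actB.flip y) (Coalgebra.comul (R := ℂ) b))) ∧
    (∀ b : B,
      actB b ((1 : R) ⊗ₜ[ℂ] (1 : A)) =
        Coalgebra.counit (R := ℂ) b • ((1 : R) ⊗ₜ[ℂ] (1 : A))) := by
  have hact' : ∀ (b : B) (r : R) (a : A), actB b (r ⊗ₜ[ℂ] a) = r ⊗ₜ[ℂ] rho pair b a := by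
    intro b r a; rw [hactB]; rfl
  have actB_eq : ∀ b : B,
      (actB b : R ⊗[ℂ] A →ₗ[ℂ] R ⊗[ℂ] A) = LinearMap.lTensor R (rho pair b) := by
    intro b
    apply TensorProduct.ext'
    intro r a
    rw [hact']
    simp
  refine ⟨?_, ?_, ?_, ?_⟩
  · -- multiplicativity of the action
    intro b b' x
    rw [actB_eq, actB_eq, actB_eq, rho_mul pair hpair_mulB, LinearMap.lTensor_comp]
    rfl
  · -- unit acts as identity
    intro x
    rw [actB_eq, rho_one pair hpair_oneB]
    simp
  · -- module algebra condition
    intro b x y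
    obtain ⟨S, hS⟩ := TensorProduct.exists_finset (Coalgebra.comul (R := ℂ) b)
    have hRHS : ∀ x y : R ⊗[ℂ] A,
        TensorProduct.lift mul
            (TensorProduct.map (actB.flip x) (actB.flip y) (Coalgebra.comul (R := ℂ) b)) =
          ∑ p ∈ S, mul (actB p.1 x) (actB p.2 y) := by
      intro x y
      rw [hS]
      simp
    rw [hRHS]
    have key : ∀ (r : R) (a : A) (s : R) (a' : A),
        actB b (mul (r ⊗ₜ[ℂ] a) (s ⊗ₜ[ℂ] a')) =
          ∑ p ∈ S, mul (actB p.1 (r ⊗ₜ[ℂ] a)) (actB p.2 (s ⊗ₜ[ℂ] a')) := by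
      intro r a s a'
      obtain ⟨T, hT⟩ := TensorProduct.exists_finset (Coalgebra.comul (R := ℂ) a')
      set P : A →ₗ[ℂ] R := LinearMap.mulLeft ℂ r ∘ₗ act.flip s with hP
      set L' : A ⊗[ℂ] (A ⊗[ℂ] A) →ₗ[ℂ] R ⊗[ℂ] A :=
        TensorProduct.map P ((TensorProduct.rid ℂ A).toLinearMap ∘ₗ
          LinearMap.lTensor A (pair.flip b) ∘ₗ
            LinearMap.mulRight ℂ (Coalgebra.comul (R := ℂ) a')) with hL'
      have h1map : LinearMap.lTensor R (rho pair b) ∘ₗ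
          TensorProduct.map P (LinearMap.mulRight ℂ a') =
          L' ∘ₗ LinearMap.lTensor A (Coalgebra.comul (R := ℂ)) := by
        apply TensorProduct.ext'
        intro x y
        simp [hL', rho_apply]
      have h1 : actB b (mul (r ⊗ₜ[ℂ] a) (s ⊗ₜ[ℂ] a')) =
          L' (LinearMap.lTensor A (Coalgebra.comul (R := ℂ)) (Coalgebra.comul (R := ℂ) a)) := by
        rw [hmul, actB_eq b]
        exact LinearMap.congr_fun h1map (Coalgebra.comul (R := ℂ) a)
      set N' : B → B → ((A ⊗[ℂ] A) ⊗[ℂ] A →ₗ[ℂ] R ⊗[ℂ] A) := fun u v =>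
        (TensorProduct.rid ℂ (R ⊗[ℂ] A)).toLinearMap ∘ₗ
          TensorProduct.map
            (TensorProduct.map P (LinearMap.mulRight ℂ (rho pair v a'))) (pair.flip u)
        with hN'
      have h3 : L' ∘ₗ (TensorProduct.assoc ℂ A A A).toLinearMap = ∑ p ∈ S, N' p.1 p.2 := by
        apply TensorProduct.ext_threefold
        intro x y z
        have hz : ∀ q : A, pair (z * q) b = ∑ p ∈ S, pair z p.1 * pair q p.2 := by
          intro q
          rw [hpair_mulA, hS]
          simp [LinearMap.mul'_apply]
        simp only [LinearMap.comp_apply, LinearEquiv.coe_coe, TensorProduct.assoc_tmul, hL',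
          TensorProduct.map_tmul, LinearMap.mulRight_apply, LinearMap.sum_apply, hN',
          TensorProduct.rid_tmul, LinearMap.lTensor_tmul, LinearMap.flip_apply, rho_apply,
          LinearMap.id_coe, id_eq]
        rw [hT]
        simp only [Finset.mul_sum, Algebra.TensorProduct.tmul_mul_tmul, map_sum,
          LinearMap.lTensor_tmul, LinearMap.flip_apply, TensorProduct.rid_tmul, hz,
          Finset.sum_smul, tmul_sum, tmul_smul, Finset.smul_sum, smul_smul, mul_smul_comm,
          mul_comm]
        rw [Finset.sum_comm]
      have h4 : ∀ u v : B,
          N' u v (LinearMap.rTensor A (Coalgebra.comul (R := ℂ)) (Coalgebra.comul (R := ℂ) a)) =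
            mul (actB u (r ⊗ₜ[ℂ] a)) (actB v (s ⊗ₜ[ℂ] a')) := by
        intro u v
        rw [hact', hact', hmul]
        have hmap : N' u v ∘ₗ LinearMap.rTensor A (Coalgebra.comul (R := ℂ)) =
            TensorProduct.map P (LinearMap.mulRight ℂ (rho pair v a')) ∘ₗ
              (Coalgebra.comul (R := ℂ)) ∘ₗ (TensorProduct.rid ℂ A).toLinearMap ∘ₗ
                LinearMap.lTensor A (pair.flip u) := by
          apply TensorProduct.ext'
          intro x y
          simp [hN', map_smul]
        have := LinearMap.congr_fun hmap (Coalgebra.comul (R := ℂ) a)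
        simp only [LinearMap.comp_apply] at this
        rw [this, rho_apply]
        rfl
      calc actB b (mul (r ⊗ₜ[ℂ] a) (s ⊗ₜ[ℂ] a'))
          = L' (LinearMap.lTensor A (Coalgebra.comul (R := ℂ)) (Coalgebra.comul (R := ℂ) a)) :=
            h1
        _ = L' ((TensorProduct.assoc ℂ A A A)
              (LinearMap.rTensor A (Coalgebra.comul (R := ℂ)) (Coalgebra.comul (R := ℂ) a))) := by
            rw [Coalgebra.coassoc_apply]
        _ = ∑ p ∈ S, N' p.1 p.2
              (LinearMap.rTensor A (Coalgebra.comul (R := ℂ)) (Coalgebra.comul (R := ℂ) a)) := by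
            have := LinearMap.congr_fun h3
              (LinearMap.rTensor A (Coalgebra.comul (R := ℂ)) (Coalgebra.comul (R := ℂ) a))
            simpa using this
        _ = ∑ p ∈ S, mul (actB p.1 (r ⊗ₜ[ℂ] a)) (actB p.2 (s ⊗ₜ[ℂ] a')) :=
            Finset.sum_congr rfl fun p _ => h4 p.1 p.2
    induction x using TensorProduct.induction_on with
    | zero => simp
    | tmul r a =>
      induction y using TensorProduct.induction_on with
      | zero => simp
      | tmul s a' => exact key r a s a'
      | add y1 y2 ih1 ih2 => simp only [map_add, ih1, ih2, Finset.sum_add_distrib]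
    | add x1 x2 ih1 ih2 =>
      simp only [map_add, LinearMap.add_apply, ih1, ih2, Finset.sum_add_distrib]
  · -- counit condition
    intro b
    rw [hact', rho_apply]
    simp [Algebra.TensorProduct.one_def, hpair_oneA]
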